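/- Let a, b ≥ 0, c ≥ 0, and d > a, let H be a random variable with values in [0,1] such that H and 1 − H have the same law, and let r(x) = cx + d. Set τ = c/(d − a) and V₁(x) = τx + 1. Then for every x > 0, a x V₁'(x) + b x V₁''(x) + r(x)(2E[V₁(Hx)] − V₁(x)) = d V₁(x); that is, V₁ is a positive eigenvector of 𝒢 with eigenvalue λ₁ = d. -/

import Mathlib

open MeasureTheory

/-- **`V₁(x) = τx + 1` is an eigenvector with eigenvalue `d` when `r(x) = cx + d`.**
In the parasite-infection model with symmetric fraction `H` (`H ~ 1 − H`) and affine
division rate `r(x) = c x + d` with `d > a`, the function `V₁(x) = τ x + 1` with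
`τ = c/(d − a)` satisfies
`a x V₁'(x) + b x V₁''(x) + r(x)(2E[V₁(Hx)] − V₁(x)) = d V₁(x)` for all `x > 0`. -/
theorem parasite_eigenvector_affine {Ω : Type*} [MeasurableSpace Ω]
    (μ : Measure Ω) [IsProbabilityMeasure μ]
    (a b c d : ℝ) (ha : 0 ≤ a) (hb : 0 ≤ b) (hc : 0 ≤ c) (hd : a < d)
    (H : Ω → ℝ) (hH_meas : Measurable H) (hH01 : ∀ ω, H ω ∈ Set.Icc (0 : ℝ) 1)
    (hH_sym : Measure.map H μ = Measure.map (fun ω => 1 - H ω) μ) :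
    ∀ x > (0 : ℝ),
      a * x * deriv (fun y : ℝ => (c / (d - a)) * y + 1) x
          + b * x * deriv (deriv (fun y : ℝ => (c / (d - a)) * y + 1)) x
          + (c * x + d) *
            (2 * (∫ ω, ((c / (d - a)) * (H ω * x) + 1) ∂μ)
              - ((c / (d - a)) * x + 1))
        = d * ((c / (d - a)) * x + 1) := by
  intro x hx
  set τ : ℝ := c / (d - a) with hτ
  -- derivatives
  have hd1 : deriv (fun y : ℝ => τ * y + 1) = fun _ => τ := by
    funext y
    have : HasDerivAt (fun y : ℝ => τ * y + 1) τ y := by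
      simpa using ((hasDerivAt_id y).const_mul τ).add_const 1
    exact this.deriv
  have hd2 : deriv (deriv (fun y : ℝ => τ * y + 1)) x = 0 := by
    rw [hd1]; exact deriv_const x τ
  -- integrability of H
  have hHint : Integrable H μ := by
    apply Integrable.mono' (integrable_const (1 : ℝ)) hH_meas.aestronglyMeasurable
    filter_upwards with ω
    rcases hH01 ω with ⟨h0, h1⟩
    rw [Real.norm_eq_abs, abs_of_nonneg h0]; exact h1
  -- E[H] = 1/2
  have hEH : (∫ ω, H ω ∂μ) = 1 / 2 := by
    have h1 : ∫ ω, H ω ∂μ = ∫ y, y ∂(Measure.map H μ) :=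
      (integral_map hH_meas.aemeasurable (f := fun y : ℝ => y)
        measurable_id.aestronglyMeasurable).symm
    have h2 : ∫ y, y ∂(Measure.map (fun ω => 1 - H ω) μ) = ∫ ω, (1 - H ω) ∂μ :=
      integral_map ((measurable_const.sub hH_meas).aemeasurable) (f := fun y : ℝ => y)
        measurable_id.aestronglyMeasurable
    have h3 : ∫ ω, ((1:ℝ) - H ω) ∂μ = 1 - ∫ ω, H ω ∂μ := by
      rw [integral_sub (integrable_const 1) hHint]
      simp
    have key : ∫ ω, H ω ∂μ = ∫ ω, ((1:ℝ) - H ω) ∂μ := by rw [h1, hH_sym, h2]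
    linarith [key, h3]
  -- compute the integral
  have hInt : (∫ ω, (τ * (H ω * x) + 1) ∂μ) = τ * x / 2 + 1 := by
    have heq : ∀ ω, τ * (H ω * x) + 1 = (τ * x) * H ω + 1 := fun ω => by ring
    simp_rw [heq]
    rw [integral_add (hHint.const_mul _) (integrable_const 1), integral_const_mul, hEH]
    simp; ring
  rw [hd1, hInt]
  simp only [deriv_const']
  have hda : d - a ≠ 0 := by linarith
  have hτda : τ * (d - a) = c := by rw [hτ]; exact div_mul_cancel₀ c hda
  nlinarith [hτda]
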